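/- For each N ≥ 1 let A(N) = ∫_{ℝ^N} |x|_N dν^{⊗N}(x), where |x|_N = (x_1² + ⋯ + x_N²)^{1/2} and ν is a probability measure on ℝ with mean 0 and variance 1 (and finite second moment). Then there exists C_1 > 0 such that C_1 √N ≤ A(N) ≤ √N for all N ≥ 1. -/

import Mathlib

open MeasureTheory Real Finset

namespace Stmt15Aux

/-! ### Elementary real inequalities -/

lemma sqrt_add_le {a b : ℝ} (ha : 0 ≤ a) (hb : 0 ≤ b) :
    Real.sqrt (a + b) ≤ Real.sqrt a + Real.sqrt b := by
  have h : a + b ≤ (Real.sqrt a + Real.sqrt b) ^ 2 := by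
    rw [add_sq, Real.sq_sqrt ha, Real.sq_sqrt hb]
    nlinarith [Real.sqrt_nonneg a, Real.sqrt_nonneg b]
  have := Real.sqrt_le_sqrt h
  rwa [Real.sqrt_sq (by positivity)] at this

lemma sqrt_sum_le {ι : Type*} (s : Finset ι) (f : ι → ℝ) (hf : ∀ i ∈ s, 0 ≤ f i) :
    Real.sqrt (∑ i ∈ s, f i) ≤ ∑ i ∈ s, Real.sqrt (f i) := by
  induction s using Finset.cons_induction with
  | empty => simp
  | cons a s ha ih =>
    rw [Finset.sum_cons, Finset.sum_cons]
    have h1 : 0 ≤ f a := hf a (Finset.mem_cons_self a s)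
    have h2 : ∀ i ∈ s, 0 ≤ f i := fun i hi => hf i (Finset.mem_cons_of_mem hi)
    calc Real.sqrt (f a + ∑ i ∈ s, f i)
        ≤ Real.sqrt (f a) + Real.sqrt (∑ i ∈ s, f i) :=
          sqrt_add_le h1 (Finset.sum_nonneg h2)
      _ ≤ _ := by gcongr; exact ih h2

/-- key pointwise inequality: `a/(2√(a+b)) ≤ √(a+b) - √b` -/
lemma key_ineq {a b : ℝ} (ha : 0 ≤ a) (hb : 0 ≤ b) :
    a / (2 * Real.sqrt (a + b)) ≤ Real.sqrt (a + b) - Real.sqrt b := by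
  rcases eq_or_lt_of_le (by positivity : (0:ℝ) ≤ a + b) with h | h
  · have ha0 : a = 0 := by nlinarith
    have hb0 : b = 0 := by nlinarith
    simp [ha0, hb0]
  · have hT : 0 < Real.sqrt (a + b) := Real.sqrt_pos.2 h
    rw [div_le_iff₀ (by positivity)]
    have h1 : 2 * Real.sqrt (a+b) * Real.sqrt b ≤ (a + b) + b := by
      nlinarith [Real.sq_sqrt (le_of_lt h), Real.sq_sqrt hb,
        sq_nonneg (Real.sqrt (a+b) - Real.sqrt b)]
    have h2 : Real.sqrt (a+b) * Real.sqrt (a+b) = a + b := Real.mul_self_sqrt (le_of_lt h)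
    nlinarith

/-- `t²/(2√(t²+s)) ≤ |t|` -/
lemma H_le_abs (t s : ℝ) (hs : 0 ≤ s) :
    t ^ 2 / (2 * Real.sqrt (t ^ 2 + s)) ≤ |t| := by
  rcases eq_or_ne t 0 with rfl | ht
  · simp
  · have h1 : |t| ≤ Real.sqrt (t ^ 2 + s) := by
      rw [← Real.sqrt_sq_eq_abs]
      exact Real.sqrt_le_sqrt (by linarith)
    have h2 : 0 < |t| := abs_pos.2 ht
    have h3 : 0 < Real.sqrt (t ^ 2 + s) := lt_of_lt_of_le h2 h1
    calc t ^ 2 / (2 * Real.sqrt (t ^ 2 + s)) ≤ t ^ 2 / (2 * |t|) := by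
          apply div_le_div_of_nonneg_left (by positivity) (by positivity)
          linarith
      _ ≤ |t| := by
          rw [div_le_iff₀ (by positivity), ← sq_abs]
          nlinarith

/-! ### Marginals of product measures -/

variable {ν : Measure ℝ} [IsProbabilityMeasure ν]

lemma map_eval (M : ℕ) (i : Fin M) :
    (Measure.pi fun _ : Fin M => ν).map (fun x => x i) = ν := by
  ext s hs
  rw [Measure.map_apply (measurable_pi_apply i) hs]
  have : (fun x : Fin M → ℝ => x i) ⁻¹' s
      = Set.univ.pi (Function.update (fun _ => Set.univ) i s) := Set.eval_preimage
  rw [this, Measure.pi_pi]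
  rw [Finset.prod_eq_single i (fun j _ hj => by simp [Function.update_of_ne hj]) (by simp)]
  simp

lemma integrable_comp_eval {M : ℕ} (i : Fin M) {g : ℝ → ℝ} (hg : Integrable g ν) :
    Integrable (fun x : Fin M → ℝ => g (x i)) (Measure.pi fun _ : Fin M => ν) := by
  have hmap := map_eval (ν := ν) M i
  have h := (integrable_map_measure (μ := Measure.pi fun _ : Fin M => ν)
    (f := fun x => x i) (g := g)
    (by rw [hmap]; exact hg.aestronglyMeasurable) (measurable_pi_apply i).aemeasurable).1
  rw [hmap] at h
  exact h hg

lemma integral_comp_eval {M : ℕ} (i : Fin M) {g : ℝ → ℝ} (hg : AEStronglyMeasurable g ν) :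
    ∫ x, g (x i) ∂(Measure.pi fun _ : Fin M => ν) = ∫ t, g t ∂ν := by
  have hmap := map_eval (ν := ν) M i
  conv_rhs => rw [← hmap]
  exact (integral_map (measurable_pi_apply i).aemeasurable (by rw [hmap]; exact hg)).symm

/-! ### The quantity `A` and basic integrability -/

variable (ν) in
noncomputable def A (M : ℕ) : ℝ :=
  ∫ x, Real.sqrt (∑ j, (x j) ^ 2) ∂(Measure.pi (fun _ : Fin M => ν))

section Moments
variable (hint2 : Integrable (fun t : ℝ => t ^ 2) ν)
include hint2

lemma hint1 : Integrable (fun t : ℝ => |t|) ν := by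
  have h : MemLp (fun t : ℝ => t) 2 ν :=
    (memLp_two_iff_integrable_sq aestronglyMeasurable_id).2 hint2
  exact (h.integrable one_le_two).abs

lemma integrable_S (M : ℕ) :
    Integrable (fun x : Fin M → ℝ => ∑ j, (x j) ^ 2) (Measure.pi fun _ : Fin M => ν) :=
  integrable_finset_sum _ fun i _ => integrable_comp_eval i hint2

lemma integrable_sqrtS (M : ℕ) :
    Integrable (fun x : Fin M → ℝ => Real.sqrt (∑ j, (x j) ^ 2))
      (Measure.pi fun _ : Fin M => ν) := by
  have hmeas : Measurable fun x : Fin M → ℝ => Real.sqrt (∑ j, (x j) ^ 2) := by fun_prop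
  refine Integrable.mono' (g := fun x => ∑ j, |x j|)
    (integrable_finset_sum _ fun i _ => integrable_comp_eval i (hint1 hint2))
    hmeas.aestronglyMeasurable ?_
  filter_upwards with x
  rw [Real.norm_eq_abs, abs_of_nonneg (Real.sqrt_nonneg _)]
  calc Real.sqrt (∑ j, (x j) ^ 2) ≤ ∑ j, Real.sqrt ((x j) ^ 2) :=
        sqrt_sum_le _ _ (fun i _ => sq_nonneg _)
    _ = ∑ j, |x j| := by simp [Real.sqrt_sq_eq_abs]

lemma integral_S (hvar : ∫ t, t ^ 2 ∂ν = 1) (M : ℕ) :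
    ∫ x, (∑ j, (x j) ^ 2) ∂(Measure.pi fun _ : Fin M => ν) = M := by
  rw [integral_finset_sum _ fun i _ => integrable_comp_eval i hint2]
  have : ∀ i : Fin M, ∫ x, (x i) ^ 2 ∂(Measure.pi fun _ : Fin M => ν) = 1 := fun i => by
    rw [integral_comp_eval i (by fun_prop : Measurable fun t : ℝ => t ^ 2).aestronglyMeasurable]
    exact hvar
  simp [this]

end Moments

omit [IsProbabilityMeasure ν] in
lemma A_nonneg (M : ℕ) : 0 ≤ A ν M :=
  integral_nonneg fun x => Real.sqrt_nonneg _

/-! ### Upper bound -/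

lemma upper (hint2 : Integrable (fun t : ℝ => t ^ 2) ν) (hvar : ∫ t, t ^ 2 ∂ν = 1) (M : ℕ) :
    A ν M ≤ Real.sqrt M := by
  set g : (Fin M → ℝ) → ℝ := fun x => Real.sqrt (∑ j, (x j) ^ 2) with hg
  have hmeas : Measurable g := by fun_prop
  have hsq : ∀ x, g x ^ 2 = ∑ j, (x j) ^ 2 := fun x =>
    Real.sq_sqrt (Finset.sum_nonneg fun i _ => sq_nonneg _)
  have hMem : MemLp g 2 (Measure.pi fun _ : Fin M => ν) := by
    refine (memLp_two_iff_integrable_sq hmeas.aestronglyMeasurable).2 ?_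
    exact (integrable_S hint2 M).congr (by filter_upwards with x using (hsq x).symm)
  have hvn := ProbabilityTheory.variance_nonneg g (Measure.pi fun _ : Fin M => ν)
  rw [ProbabilityTheory.variance_eq_sub hMem] at hvn
  have hint : ∫ x, (g ^ 2) x ∂(Measure.pi fun _ : Fin M => ν) = M := by
    have : (fun x => (g ^ 2) x) = fun x : Fin M → ℝ => ∑ j, (x j) ^ 2 := by
      funext x; simp [Pi.pow_apply, hsq x]
    rw [this, integral_S hint2 hvar M]
  rw [hint] at hvn
  have hA : A ν M = ∫ x, g x ∂(Measure.pi fun _ : Fin M => ν) := rfl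
  rw [hA]
  exact (Real.le_sqrt (integral_nonneg fun x => Real.sqrt_nonneg _) (Nat.cast_nonneg M)).2
    (by linarith)

/-! ### Symmetry -/

lemma piCongr_coe (M : ℕ) (σ : Fin M ≃ Fin M) (x : Fin M → ℝ) :
    (MeasurableEquiv.piCongrLeft (fun _ : Fin M => ℝ) σ) x = fun j => x (σ.symm j) := by
  funext j
  have := Equiv.piCongrLeft_apply_apply (fun _ : Fin M => ℝ) σ x (σ.symm j)
  simpa [MeasurableEquiv.coe_piCongrLeft] using this

lemma integral_h_symm (M : ℕ) (i k : Fin M) :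
    ∫ x, (x i) ^ 2 / (2 * Real.sqrt (∑ j, (x j) ^ 2)) ∂(Measure.pi fun _ : Fin M => ν)
      = ∫ x, (x k) ^ 2 / (2 * Real.sqrt (∑ j, (x j) ^ 2)) ∂(Measure.pi fun _ : Fin M => ν) := by
  set σ : Fin M ≃ Fin M := Equiv.swap i k
  have hmp : MeasurePreserving (MeasurableEquiv.piCongrLeft (fun _ : Fin M => ℝ) σ)
      (Measure.pi fun _ : Fin M => ν) (Measure.pi fun _ : Fin M => ν) :=
    measurePreserving_piCongrLeft (fun _ : Fin M => ν) σ
  rw [← hmp.integral_comp' (fun x => (x i) ^ 2 / (2 * Real.sqrt (∑ j, (x j) ^ 2)))]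
  congr 1
  funext x
  rw [piCongr_coe]
  have hsum : ∑ j, (x (σ.symm j)) ^ 2 = ∑ j, (x j) ^ 2 :=
    Equiv.sum_comp σ.symm (fun j => (x j) ^ 2)
  simp only [hsum]
  have hk : σ.symm i = k := by simp [σ, Equiv.symm_swap, Equiv.swap_apply_left]
  simp only [hk]

/-! ### The function `h_i` -/

omit [IsProbabilityMeasure ν] in
lemma h_le_sqrtS {M : ℕ} (i : Fin M) (x : Fin M → ℝ) :
    (x i) ^ 2 / (2 * Real.sqrt (∑ j, (x j) ^ 2)) ≤ Real.sqrt (∑ j, (x j) ^ 2) := by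
  set S := ∑ j, (x j) ^ 2 with hSdef
  have hS : 0 ≤ S := Finset.sum_nonneg fun j _ => sq_nonneg _
  rcases eq_or_lt_of_le hS with h | h
  · rw [← h]; simp
  · have hsq : 0 < Real.sqrt S := Real.sqrt_pos.2 h
    rw [div_le_iff₀ (by positivity)]
    have hx : (x i) ^ 2 ≤ S := Finset.single_le_sum (fun j _ => sq_nonneg (x j)) (mem_univ i)
    have : Real.sqrt S * Real.sqrt S = S := Real.mul_self_sqrt hS
    nlinarith

lemma integrable_h (hint2 : Integrable (fun t : ℝ => t ^ 2) ν) {M : ℕ} (i : Fin M) :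
    Integrable (fun x : Fin M → ℝ => (x i) ^ 2 / (2 * Real.sqrt (∑ j, (x j) ^ 2)))
      (Measure.pi fun _ : Fin M => ν) := by
  refine Integrable.mono' (integrable_sqrtS hint2 M)
    (Measurable.aestronglyMeasurable (by fun_prop)) ?_
  filter_upwards with x
  rw [Real.norm_eq_abs, abs_of_nonneg (by positivity)]
  exact h_le_sqrtS i x

omit [IsProbabilityMeasure ν] in
lemma sum_h {M : ℕ} (x : Fin M → ℝ) :
    ∑ i, (x i) ^ 2 / (2 * Real.sqrt (∑ j, (x j) ^ 2)) = Real.sqrt (∑ j, (x j) ^ 2) / 2 := by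
  set S := ∑ j, (x j) ^ 2 with hSdef
  have hS : 0 ≤ S := Finset.sum_nonneg fun j _ => sq_nonneg _
  rw [← Finset.sum_div]
  rcases eq_or_lt_of_le hS with h | h
  · rw [← hSdef, ← h]; simp
  · have hsq : 0 < Real.sqrt S := Real.sqrt_pos.2 h
    rw [← hSdef]
    have hmul : Real.sqrt S * Real.sqrt S = S := Real.mul_self_sqrt hS
    field_simp
    nlinarith

lemma integral_h0 (hint2 : Integrable (fun t : ℝ => t ^ 2) ν) (N : ℕ) :
    ∫ x, (x 0) ^ 2 / (2 * Real.sqrt (∑ j, (x j) ^ 2)) ∂(Measure.pi fun _ : Fin (N+1) => ν)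
      = A ν (N+1) / (2 * (N+1)) := by
  set M := N + 1
  have hsum : ∑ i : Fin M, ∫ x, (x i) ^ 2 / (2 * Real.sqrt (∑ j, (x j) ^ 2))
      ∂(Measure.pi fun _ : Fin M => ν)
      = (M : ℝ) * ∫ x, (x 0) ^ 2 / (2 * Real.sqrt (∑ j, (x j) ^ 2))
        ∂(Measure.pi fun _ : Fin M => ν) := by
    rw [Finset.sum_congr rfl fun i _ => integral_h_symm M i 0]
    simp [Finset.card_fin, mul_comm]
  have hsum2 : ∑ i : Fin M, ∫ x, (x i) ^ 2 / (2 * Real.sqrt (∑ j, (x j) ^ 2))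
      ∂(Measure.pi fun _ : Fin M => ν) = A ν M / 2 := by
    rw [← integral_finset_sum _ fun i _ => integrable_h hint2 i]
    rw [show (fun x : Fin M → ℝ => ∑ i, (x i) ^ 2 / (2 * Real.sqrt (∑ j, (x j) ^ 2)))
        = fun x => Real.sqrt (∑ j, (x j) ^ 2) / 2 from funext fun x => sum_h x]
    rw [integral_div]
    rfl
  have hM : (0:ℝ) < M := by positivity
  rw [hsum] at hsum2
  field_simp at hsum2 ⊢
  push_cast at hsum2 ⊢
  simp only [M] at hsum2; push_cast at hsum2
  linarith

/-! ### The recursion step -/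

lemma step (hint2 : Integrable (fun t : ℝ => t ^ 2) ν) (N : ℕ) :
    A ν N ≤ A ν (N + 1) * ((2 * (N:ℝ) + 1) / (2 * N + 2)) := by
  set ρ : Measure (ℝ × (Fin N → ℝ)) := ν.prod (Measure.pi fun _ : Fin N => ν) with hρ
  set e := MeasurableEquiv.piFinSuccAbove (fun _ : Fin (N+1) => ℝ) 0 with he
  have hep : MeasurePreserving e (Measure.pi fun _ : Fin (N+1) => ν) ρ :=
    measurePreserving_piFinSuccAbove (fun _ : Fin (N+1) => ν) 0
  set G : ℝ × (Fin N → ℝ) → ℝ := fun z => Real.sqrt (z.1 ^ 2 + ∑ j, (z.2 j) ^ 2) with hG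
  set f2 : ℝ × (Fin N → ℝ) → ℝ := fun z => Real.sqrt (∑ j, (z.2 j) ^ 2) with hf2
  set Hf : ℝ × (Fin N → ℝ) → ℝ :=
    fun z => z.1 ^ 2 / (2 * Real.sqrt (z.1 ^ 2 + ∑ j, (z.2 j) ^ 2)) with hHf
  have hSnn : ∀ z : ℝ × (Fin N → ℝ), (0:ℝ) ≤ ∑ j, (z.2 j) ^ 2 :=
    fun z => Finset.sum_nonneg fun j _ => sq_nonneg _
  have hGe : ∀ x : Fin (N+1) → ℝ, G (e x) = Real.sqrt (∑ j, (x j) ^ 2) := by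
    intro x
    simp [hG, he, MeasurableEquiv.piFinSuccAbove_apply, Fin.sum_univ_succ,
      Fin.insertNthEquiv, Fin.removeNth, Fin.tail, Fin.succAbove_zero]
  have hHe : ∀ x : Fin (N+1) → ℝ,
      Hf (e x) = (x 0) ^ 2 / (2 * Real.sqrt (∑ j, (x j) ^ 2)) := by
    intro x
    simp [hHf, he, MeasurableEquiv.piFinSuccAbove_apply, Fin.sum_univ_succ,
      Fin.insertNthEquiv, Fin.removeNth, Fin.tail, Fin.succAbove_zero]
  have hAG : A ν (N+1) = ∫ z, G z ∂ρ := by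
    rw [A, ← hep.integral_comp' G]
    exact integral_congr_ae (Filter.Eventually.of_forall fun x => (hGe x).symm)
  have hH0 : ∫ z, Hf z ∂ρ = A ν (N+1) / (2 * (N+1)) := by
    rw [← hep.integral_comp' Hf, integral_congr_ae (Filter.Eventually.of_forall
      fun x => (hHe x).trans rfl), integral_h0 hint2 N]
  have hmaps : ρ.map Prod.snd = (Measure.pi fun _ : Fin N => ν) := Measure.snd_prod
  have hmapf : ρ.map Prod.fst = ν := Measure.fst_prod
  have hmes2 : AEStronglyMeasurable (fun x : Fin N → ℝ => Real.sqrt (∑ j, (x j) ^ 2))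
      (ρ.map Prod.snd) := by
    rw [hmaps]; exact (Measurable.aestronglyMeasurable (by fun_prop))
  have hmesa : AEStronglyMeasurable (fun t : ℝ => |t|) (ρ.map Prod.fst) := by
    rw [hmapf]; exact (Measurable.aestronglyMeasurable (by fun_prop))
  have hf2int : ∫ z, f2 z ∂ρ = A ν N := by
    have := integral_map (f := fun x : Fin N → ℝ => Real.sqrt (∑ j, (x j) ^ 2))
      measurable_snd.aemeasurable hmes2
    rw [hmaps] at this
    exact this.symm
  have i2 : Integrable f2 ρ :=
    (integrable_map_measure hmes2 measurable_snd.aemeasurable).1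
      (by rw [hmaps]; exact integrable_sqrtS hint2 N)
  have iabs : Integrable (fun z : ℝ × (Fin N → ℝ) => |z.1|) ρ :=
    (integrable_map_measure hmesa measurable_fst.aemeasurable).1
      (by rw [hmapf]; exact hint1 hint2)
  have iG : Integrable G ρ := by
    refine Integrable.mono' (iabs.add i2) (Measurable.aestronglyMeasurable (by fun_prop)) ?_
    filter_upwards with z
    rw [Real.norm_eq_abs, abs_of_nonneg (Real.sqrt_nonneg _)]
    calc G z ≤ Real.sqrt (z.1 ^ 2) + Real.sqrt (∑ j, (z.2 j) ^ 2) :=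
          sqrt_add_le (sq_nonneg _) (hSnn z)
      _ = |z.1| + f2 z := by rw [Real.sqrt_sq_eq_abs]
  have iH : Integrable Hf ρ := by
    refine Integrable.mono' iabs (Measurable.aestronglyMeasurable (by fun_prop)) ?_
    filter_upwards with z
    rw [Real.norm_eq_abs, abs_of_nonneg (by positivity)]
    exact H_le_abs z.1 _ (hSnn z)
  have hmono : ∫ z, Hf z ∂ρ ≤ ∫ z, (G z - f2 z) ∂ρ := by
    refine integral_mono iH (iG.sub i2) fun z => ?_
    exact key_ineq (sq_nonneg z.1) (hSnn z)
  rw [integral_sub iG i2, hH0, hf2int, ← hAG] at hmono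
  have hNpos : (0:ℝ) < 2 * (N:ℝ) + 2 := by positivity
  have h1 : (0:ℝ) < 2 * ((N:ℝ) + 1) := by positivity
  rw [div_le_iff₀ h1] at hmono
  rw [mul_div_assoc', le_div_iff₀ hNpos]
  nlinarith [hmono]

/-! ### Lower bound by induction -/

lemma lower (hint2 : Integrable (fun t : ℝ => t ^ 2) ν) :
    ∀ N : ℕ, 1 ≤ N → A ν 1 / Real.sqrt 3 * Real.sqrt (2 * (N:ℝ) + 1) ≤ A ν N := by
  have hc : 0 ≤ A ν 1 / Real.sqrt 3 := by
    have := A_nonneg (ν := ν) 1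
    positivity
  set c := A ν 1 / Real.sqrt 3 with hcdef
  intro N hN
  induction N, hN using Nat.le_induction with
  | base =>
    have h3 : Real.sqrt (2 * ((1:ℕ):ℝ) + 1) = Real.sqrt 3 := by norm_num
    rw [h3, hcdef, div_mul_cancel₀]
    positivity
  | succ N hN ih =>
    have hN1pos : (0:ℝ) < 2 * (N:ℝ) + 1 := by positivity
    have hN2pos : (0:ℝ) < 2 * (N:ℝ) + 2 := by positivity
    set u := Real.sqrt (2 * (N:ℝ) + 1) with hu
    have hupos : 0 < u := Real.sqrt_pos.2 hN1pos
    have huu : u * u = 2 * (N:ℝ) + 1 := Real.mul_self_sqrt hN1pos.le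
    -- from step and ih
    have hstep := step hint2 N
    have h1 : c * u * (2 * (N:ℝ) + 2) ≤ A ν (N + 1) * (2 * N + 1) := by
      have h1' : c * u ≤ A ν (N + 1) * (2 * N + 1) / (2 * N + 2) := by
        rw [← mul_div_assoc']; linarith [ih]
      rw [le_div_iff₀ hN2pos] at h1'
      exact h1'
    -- the sqrt comparison
    have hcast : 2 * ((N:ℝ) + 1) + 1 = 2 * (N:ℝ) + 3 := by ring
    have key' : Real.sqrt (2 * (N:ℝ) + 3) * u ≤ 2 * (N:ℝ) + 2 := by
      rw [hu, ← Real.sqrt_mul_self (by positivity : (0:ℝ) ≤ 2 * (N:ℝ) + 2)]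
      rw [← Real.sqrt_mul (by positivity)]
      exact Real.sqrt_le_sqrt (by nlinarith)
    have h4 : Real.sqrt (2 * (N:ℝ) + 3) ≤ u * (2 * (N:ℝ) + 2) / (2 * N + 1) := by
      rw [le_div_iff₀ hN1pos]
      calc Real.sqrt (2 * (N:ℝ) + 3) * (2 * N + 1)
          = u * (Real.sqrt (2 * (N:ℝ) + 3) * u) := by rw [← huu]; ring
        _ ≤ u * (2 * (N:ℝ) + 2) := by
            exact mul_le_mul_of_nonneg_left key' hupos.le
    have h5 : c * Real.sqrt (2 * (N:ℝ) + 3)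
        ≤ c * (u * (2 * (N:ℝ) + 2) / (2 * N + 1)) := mul_le_mul_of_nonneg_left h4 hc
    have h6 : c * (u * (2 * (N:ℝ) + 2) / (2 * N + 1)) ≤ A ν (N + 1) := by
      rw [show c * (u * (2 * (N:ℝ) + 2) / (2 * N + 1))
          = c * u * (2 * (N:ℝ) + 2) / (2 * N + 1) by ring]
      rw [div_le_iff₀ hN1pos]
      exact h1
    have : c * Real.sqrt (2 * (↑(N + 1):ℝ) + 1) = c * Real.sqrt (2 * (N:ℝ) + 3) := by
      push_cast
      rw [hcast]
    rw [this]
    linarith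

lemma A_one_pos (hint2 : Integrable (fun t : ℝ => t ^ 2) ν) (hvar : ∫ t, t ^ 2 ∂ν = 1) :
    0 < A ν 1 := by
  have hA1 : A ν 1 = ∫ t, |t| ∂ν := by
    rw [A, show (fun x : Fin 1 → ℝ => Real.sqrt (∑ j, (x j) ^ 2))
        = fun x : Fin 1 → ℝ => |x 0| from funext fun x => by
          rw [Fin.sum_univ_one, Real.sqrt_sq_eq_abs]]
    exact integral_comp_eval 0 (Measurable.aestronglyMeasurable (by fun_prop))
  rw [hA1]
  rcases eq_or_lt_of_le (integral_nonneg fun t => abs_nonneg t : 0 ≤ ∫ t, |t| ∂ν) with h | h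
  · exfalso
    have habs : (fun t : ℝ => |t|) =ᵐ[ν] 0 :=
      (integral_eq_zero_iff_of_nonneg (fun t => abs_nonneg t) (hint1 hint2)).1 h.symm
    have hsq : (fun t : ℝ => t ^ 2) =ᵐ[ν] 0 := by
      filter_upwards [habs] with t ht
      have : |t| = 0 := ht
      simp only [Pi.zero_apply]
      nlinarith [abs_nonneg t, sq_abs t]
    rw [integral_congr_ae hsq] at hvar
    simp at hvar
  · exact h

end Stmt15Aux

open Stmt15Aux

/-- Two-sided estimate of `A(N) = ∫ |x|_N dν^{⊗N}` for a centred normalized probability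
measure `ν` on `ℝ`: there is `C₁ > 0` with `C₁ √N ≤ A(N) ≤ √N` for all `N ≥ 1`. -/
theorem stmt15 (ν : Measure ℝ) [IsProbabilityMeasure ν]
    (hmean : ∫ x, x ∂ν = 0) (hvar : ∫ x, x ^ 2 ∂ν = 1) :
    ∃ C₁ > 0, ∀ N : ℕ, 1 ≤ N →
      C₁ * Real.sqrt N ≤
        (∫ x, Real.sqrt (∑ j, (x j) ^ 2) ∂(Measure.pi (fun _ : Fin N => ν))) ∧
      (∫ x, Real.sqrt (∑ j, (x j) ^ 2) ∂(Measure.pi (fun _ : Fin N => ν))) ≤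
        Real.sqrt N := by
  have hint2 : Integrable (fun t : ℝ => t ^ 2) ν := by
    by_contra h
    rw [integral_undef h] at hvar
    norm_num at hvar
  have hA1 := A_one_pos hint2 hvar
  refine ⟨A ν 1 / Real.sqrt 3, by positivity, fun N hN => ⟨?_, ?_⟩⟩
  · have hlow := lower hint2 N hN
    have hmono : Real.sqrt (N:ℝ) ≤ Real.sqrt (2 * (N:ℝ) + 1) :=
      Real.sqrt_le_sqrt (by push_cast; linarith [Nat.cast_nonneg (α := ℝ) N])
    have hc : (0:ℝ) ≤ A ν 1 / Real.sqrt 3 := by positivity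
    calc A ν 1 / Real.sqrt 3 * Real.sqrt N
        ≤ A ν 1 / Real.sqrt 3 * Real.sqrt (2 * (N:ℝ) + 1) :=
          mul_le_mul_of_nonneg_left hmono hc
      _ ≤ A ν N := hlow
  · exact upper hint2 hvar N
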